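/- arXiv:2503.12140 — 6 statements merged into one kernel-verified Lean document; each statement's English description precedes it below -/
import Mathlib

section
/- For all real x ≥ 1, the modified Bessel function of the first kind of order zero satisfies I₀(x) ≥ (5/(6π)) · e^x / √x. -/
open Real MeasureTheory intervalIntegral

/-- The modified Bessel function of the first kind of order zero, via the
integral representation `I₀(x) = (1/π) ∫₀^π e^{x cos θ} dθ`. -/
noncomputable def besselI0 (x : ℝ) : ℝ :=
  (1 / Real.pi) * ∫ θ in (0:ℝ)..Real.pi, Real.exp (x * Real.cos θ)

theorem besselI0_lower_bound {x : ℝ} (hx : 1 ≤ x) :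
    (5 / (6 * Real.pi)) * Real.exp x / Real.sqrt x ≤ besselI0 x := by
  have hx0 : (0:ℝ) < x := lt_of_lt_of_le one_pos hx
  have hsx : 0 < Real.sqrt x := Real.sqrt_pos.2 hx0
  set a : ℝ := Real.sqrt 2 / Real.sqrt x with ha
  have hs2 : (Real.sqrt 2) ^ 2 = 2 := Real.sq_sqrt (by norm_num)
  have hs2n : 0 ≤ Real.sqrt 2 := Real.sqrt_nonneg 2
  have ha0 : 0 < a := div_pos (Real.sqrt_pos.2 two_pos) hsx
  have ha2 : a ^ 2 = 2 / x := by
    rw [ha, div_pow, hs2, Real.sq_sqrt hx0.le]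
  have hsx1 : 1 ≤ Real.sqrt x := by
    rw [show (1:ℝ) = Real.sqrt 1 by simp]
    exact Real.sqrt_le_sqrt hx
  have haπ : a ≤ Real.pi := by
    have h1 : a ≤ Real.sqrt 2 := by
      rw [ha]; exact div_le_self hs2n hsx1
    have h2 : Real.sqrt 2 ≤ 2 := by nlinarith
    linarith [Real.two_le_pi]
  have hcont : Continuous fun θ : ℝ => Real.exp (x * Real.cos θ) :=
    Real.continuous_exp.comp (continuous_const.mul Real.continuous_cos)
  have hint : IntervalIntegrable (fun θ : ℝ => Real.exp (x * Real.cos θ))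
      volume 0 Real.pi := hcont.intervalIntegrable _ _
  -- Step 1: restrict the integral to [0, a]
  have step1 : (∫ θ in (0:ℝ)..a, Real.exp (x * Real.cos θ)) ≤
      ∫ θ in (0:ℝ)..Real.pi, Real.exp (x * Real.cos θ) := by
    apply intervalIntegral.integral_mono_interval le_rfl ha0.le haπ
    · filter_upwards with θ using (Real.exp_pos _).le
    · exact hint
  -- Step 2: pointwise lower bound on [0, a]
  have step2 : (∫ θ in (0:ℝ)..a, Real.exp x * (1 - x * θ ^ 2 / 2)) ≤
      ∫ θ in (0:ℝ)..a, Real.exp (x * Real.cos θ) := by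
    apply intervalIntegral.integral_mono_on ha0.le
    · exact ((continuous_const.mul ((continuous_const.sub
        ((continuous_const.mul (continuous_pow 2)).div_const 2))))).intervalIntegrable _ _
    · exact hcont.intervalIntegrable _ _
    · intro θ hθ
      have h1 := Real.add_one_le_exp (x * (Real.cos θ - 1))
      have h2 : 1 - θ ^ 2 / 2 ≤ Real.cos θ := Real.one_sub_sq_div_two_le_cos
      have h3 : Real.exp (x * Real.cos θ)
          = Real.exp x * Real.exp (x * (Real.cos θ - 1)) := by
        rw [← Real.exp_add]; ring_nf
      rw [h3]
      have hex : (0:ℝ) < Real.exp x := Real.exp_pos x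
      have h4 : 1 - x * θ ^ 2 / 2 ≤ x * (Real.cos θ - 1) + 1 := by
        nlinarith [mul_nonneg hx0.le (sub_nonneg.2 h2)]
      exact mul_le_mul_of_nonneg_left (le_trans h4 h1) hex.le
  -- Step 3: compute the lower integral
  have step3 : (∫ θ in (0:ℝ)..a, Real.exp x * (1 - x * θ ^ 2 / 2))
      = Real.exp x * (a - x * a ^ 3 / 6) := by
    have : (∫ θ in (0:ℝ)..a, Real.exp x * (1 - x * θ ^ 2 / 2))
        = Real.exp x * ∫ θ in (0:ℝ)..a, (1 - x * θ ^ 2 / 2) := by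
      rw [← intervalIntegral.integral_const_mul]
    rw [this]
    have h4 : (∫ θ in (0:ℝ)..a, (1 - x * θ ^ 2 / 2))
        = a - x * a ^ 3 / 6 := by
      have hpow := integral_pow (a := (0:ℝ)) (b := a) 2
      rw [show (fun θ : ℝ => 1 - x * θ ^ 2 / 2)
          = fun θ : ℝ => 1 - (x / 2) * θ ^ 2 by funext θ; ring]
      rw [intervalIntegral.integral_sub (g := fun θ : ℝ => (x / 2) * θ ^ 2) (intervalIntegrable_const)
        ((continuous_const.mul (continuous_pow 2)).intervalIntegrable _ _),
        intervalIntegral.integral_const_mul, hpow]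
      norm_num
      ring
    rw [h4]
  -- combine
  have hxa2 : x * a ^ 2 = 2 := by rw [ha2]; field_simp
  have hxa3 : x * a ^ 3 = 2 * a := by linear_combination a * hxa2
  have hval : Real.exp x * (a - x * a ^ 3 / 6) = (2/3) * Real.exp x * a := by
    rw [hxa3]; ring
  have key : (2/3) * Real.exp x * a ≤ ∫ θ in (0:ℝ)..Real.pi, Real.exp (x * Real.cos θ) := by
    rw [← hval, ← step3]; exact le_trans step2 step1
  have hπ : 0 < Real.pi := Real.pi_pos
  rw [besselI0]
  rw [div_le_iff₀ hsx]
  have h5 : (5 / (6 * Real.pi)) * Real.exp x = (5/6) * Real.exp x / Real.pi := by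
    field_simp
  have hfinal : (5 / (6 * Real.pi)) * Real.exp x ≤ (1 / Real.pi) * ((2/3) * Real.exp x * a) * Real.sqrt x := by
    have hax : a * Real.sqrt x = Real.sqrt 2 := by
      rw [ha]; field_simp
    have : (1 / Real.pi) * ((2/3) * Real.exp x * a) * Real.sqrt x
        = (2/3) * Real.sqrt 2 * Real.exp x / Real.pi := by
      linear_combination (2/3 * Real.exp x / Real.pi) * hax
    rw [this, h5, div_le_div_iff₀ hπ hπ]
    have hs54 : (5:ℝ)/4 ≤ Real.sqrt 2 := by nlinarith
    nlinarith [hs54, mul_pos (Real.exp_pos x) hπ, mul_nonneg (Real.exp_pos x).le hπ.le]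
  calc (5 / (6 * Real.pi)) * Real.exp x
      ≤ (1 / Real.pi) * ((2/3) * Real.exp x * a) * Real.sqrt x := hfinal
    _ ≤ (1 / Real.pi) * (∫ θ in (0:ℝ)..Real.pi, Real.exp (x * Real.cos θ)) * Real.sqrt x := by
        apply mul_le_mul_of_nonneg_right _ hsx.le
        exact mul_le_mul_of_nonneg_left key (by positivity)
end

section
/- Let p > 1 and α ∈ (0,1], and let w(t) = ( 1/2 + 1/(2^{1/α} + t)^α )^{−1/(p−1)}. Then for all t ≥ 0, w''(t) + w'(t) ≥ 0. -/
open Real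

theorem w_second_derivative_ineq {p α : ℝ} (hp : 1 < p) (hα : α ∈ Set.Ioc (0:ℝ) 1) :
    let w : ℝ → ℝ := fun t =>
      ((1:ℝ) / 2 + 1 / ((2:ℝ) ^ (1 / α) + t) ^ α) ^ (-(1 / (p - 1)))
    ∀ t : ℝ, 0 ≤ t → 0 ≤ deriv (deriv w) t + deriv w t := by
  intro w t ht
  obtain ⟨hα0, hα1⟩ := hα
  set β : ℝ := 1 / (p - 1) with hβdef
  have hβ : 0 < β := by
    rw [hβdef]; exact div_pos one_pos (by linarith)
  set B : ℝ := (2:ℝ) ^ (1 / α) with hBdef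
  have hB2 : 2 ≤ B := by
    calc (2:ℝ) = 2 ^ (1:ℝ) := (rpow_one 2).symm
    _ ≤ 2 ^ (1/α) := by
        apply rpow_le_rpow_of_exponent_le one_le_two
        rw [le_div_iff₀ hα0]; linarith
  -- abbreviations
  set u : ℝ → ℝ := fun s => (1:ℝ)/2 + 1 / (B + s) ^ α with hudef
  set W1 : ℝ → ℝ := fun s => α * β * (u s) ^ (-β - 1) * (B + s) ^ (-α - 1) with hW1def
  have hw : w = fun s => (u s) ^ (-β) := by
    funext s; simp only [w, u, hβdef, hBdef]
  -- positivity facts for s > -B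
  have hupos : ∀ s : ℝ, -B < s → 0 < u s := by
    intro s hs
    have hv : 0 < B + s := by linarith
    have : 0 < (B + s) ^ α := rpow_pos_of_pos hv α
    simp only [u]
    positivity
  have hw1 : ∀ s : ℝ, -B < s → HasDerivAt w (W1 s) s := by
    intro s hs
    have hv : 0 < B + s := by linarith
    have h1 : HasDerivAt (fun y : ℝ => B + y) 1 s := (hasDerivAt_id s).const_add B
    have h2 : HasDerivAt (fun y : ℝ => (B + y) ^ α) (1 * α * (B + s) ^ (α - 1)) s :=
      h1.rpow_const (Or.inl hv.ne')
    have h3 : HasDerivAt (fun y : ℝ => ((B + y) ^ α)⁻¹)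
        (-(1 * α * (B + s) ^ (α - 1)) / ((B + s) ^ α) ^ 2) s :=
      h2.inv (rpow_pos_of_pos hv α).ne'
    have h4 : HasDerivAt u (-(1 * α * (B + s) ^ (α - 1)) / ((B + s) ^ α) ^ 2) s := by
      simp only [u, one_div]
      exact h3.const_add _
    have h5 := h4.rpow_const (Or.inl (hupos s hs).ne') (p := -β)
    rw [hw]
    convert h5 using 1
    have hsq : ((B + s) ^ α) ^ 2 = (B + s) ^ (α * 2) := by
      rw [← rpow_natCast ((B + s) ^ α) 2, ← rpow_mul hv.le]; norm_num
    rw [hsq]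
    rw [show -(1 * α * (B + s) ^ (α - 1)) / (B + s) ^ (α * 2)
        = -(α * ((B + s) ^ (α - 1) / (B + s) ^ (α * 2))) by ring]
    rw [← rpow_sub hv]
    simp only [W1]
    rw [show α - 1 - α * 2 = -α - 1 by ring]
    ring
  have hderiv1 : ∀ s : ℝ, -B < s → deriv w s = W1 s := fun s hs => (hw1 s hs).deriv
  have htB : -B < t := by linarith
  have hv : 0 < B + t := by linarith
  have hvα : 0 < (B + t) ^ α := rpow_pos_of_pos hv α
  have hut : 0 < u t := hupos t htB
  -- second derivative
  set W2 : ℝ :=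
    α * β * ((α * (β + 1) * (u t) ^ (-β - 2) * (B + t) ^ (-α - 1) * (B + t) ^ (-α - 1))
      - (α + 1) * (u t) ^ (-β - 1) * (B + t) ^ (-α - 2)) with hW2def
  have hw2 : HasDerivAt W1 W2 t := by
    have h1 : HasDerivAt (fun y : ℝ => B + y) 1 t := (hasDerivAt_id t).const_add B
    have h2 : HasDerivAt (fun y : ℝ => (B + y) ^ α) (1 * α * (B + t) ^ (α - 1)) t :=
      h1.rpow_const (Or.inl hv.ne')
    have h3 : HasDerivAt (fun y : ℝ => ((B + y) ^ α)⁻¹)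
        (-(1 * α * (B + t) ^ (α - 1)) / ((B + t) ^ α) ^ 2) t :=
      h2.inv hvα.ne'
    have h4 : HasDerivAt u (-(1 * α * (B + t) ^ (α - 1)) / ((B + t) ^ α) ^ 2) t := by
      simp only [u, one_div]
      exact h3.const_add _
    have hg := h4.rpow_const (Or.inl hut.ne') (p := -β - 1)
    have hh : HasDerivAt (fun y : ℝ => (B + y) ^ (-α - 1))
        (1 * (-α - 1) * (B + t) ^ (-α - 1 - 1)) t := h1.rpow_const (Or.inl hv.ne')
    have := ((hg.mul hh).const_mul (α * β))
    have hW1eq : W1 = fun y => α * β * (u y ^ (-β - 1) * (B + y) ^ (-α - 1)) := by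
      funext y; simp only [W1]; ring
    rw [hW1eq]
    convert this using 1
    case e'_4 => rfl
    case e'_5 => rfl
    case e'_8 => rfl
    have hsq : ((B + t) ^ α) ^ 2 = (B + t) ^ (α * 2) := by
      rw [← rpow_natCast ((B + t) ^ α) 2, ← rpow_mul hv.le]; norm_num
    have hd : (B + t) ^ (α - 1) / (B + t) ^ (α * 2) = (B + t) ^ (-α - 1) := by
      rw [← rpow_sub hv]; ring_nf
    rw [hsq]
    rw [show -(1 * α * (B + t) ^ (α - 1)) / (B + t) ^ (α * 2) * (-β - 1) * u t ^ (-β - 1 - 1)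
        = α * (β + 1) * ((B + t) ^ (α - 1) / (B + t) ^ (α * 2)) * u t ^ (-β - 1 - 1) by ring]
    rw [hd]
    rw [show -β - 1 - 1 = -β - 2 by ring, show -α - 1 - 1 = -α - 2 by ring]
    simp only [W2, W1]
    ring
  have hd2 : deriv (deriv w) t = W2 := by
    have hev : deriv w =ᶠ[nhds t] W1 := by
      filter_upwards [Ioi_mem_nhds htB] with s hs using hderiv1 s hs
    rw [hev.deriv_eq, hw2.deriv]
  rw [hd2, hderiv1 t htB]
  -- final algebra
  set A : ℝ := (B + t) ^ (-α) with hAdef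
  have hA : 0 < A := rpow_pos_of_pos hv _
  set P : ℝ := (u t) ^ (-β - 2) with hPdef
  have hP : 0 < P := rpow_pos_of_pos hut _
  have e1 : (B + t) ^ (-α - 1) = A * (B + t)⁻¹ := by
    rw [show -α - 1 = -α + (-1) by ring, rpow_add hv, rpow_neg_one]
  have e2 : (B + t) ^ (-α - 2) = A * (B + t)⁻¹ * (B + t)⁻¹ := by
    rw [show -α - 2 = -α + (-1) + (-1) by ring, rpow_add hv, rpow_add hv, rpow_neg_one]
  have e3 : (u t) ^ (-β - 1) = P * u t := by
    rw [show -β - 1 = -β - 2 + 1 by ring, rpow_add hut, rpow_one]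
  have hvv : (B + t) * (B + t)⁻¹ = 1 := mul_inv_cancel₀ hv.ne'
  simp only [W2, W1]
  rw [e1, e2, e3]
  have key : α * β * (α * (β + 1) * P * (A * (B + t)⁻¹) * (A * (B + t)⁻¹)
        - (α + 1) * (P * u t) * (A * (B + t)⁻¹ * (B + t)⁻¹))
      + α * β * (P * u t) * (A * (B + t)⁻¹)
      = α * β * P * A * (B + t)⁻¹ * (B + t)⁻¹
        * (α * (β + 1) * A + u t * ((B + t) - α - 1)) := by
    field_simp
    ring
  rw [key]
  have hlast : 0 ≤ α * (β + 1) * A + u t * ((B + t) - α - 1) := by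
    have h1 : 0 ≤ u t * ((B + t) - α - 1) := by
      apply mul_nonneg hut.le; linarith
    have h2 : 0 < α * (β + 1) * A := by positivity
    linarith
  positivity
end

section
/- Let p > 1, α ∈ (0,1], and let ε > 0 be sufficiently small. Define g(t,ε) = ( p(p+1) ε^{p-1} / ((p-1)² ε^{p-1} t + p² + p) )^{1/(p-1)}, w(t) = ( 1/2 + 1/(2^{1/α} + t)^α )^{−1/(p−1)}, and H(t) = w(t) g(t,ε). Then there is a constant C_{p,α} > 0 depending only on p and α such that for all t > 0: H''(t) + H'(t) + H(t)^p ≥ C_{p,α} (1+t)^{−(α+1)} H(t) + C_{p,α} g(t,ε)^{p−1} H(t). -/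
open Real

lemma alg1 (A B den m k p : ℝ) (hA : 0<A) (hden : 0<den)
    (hmp : m*p = m+1) (hkA : k*A = m*B) :
    (-(A*B)/den^2) * m * (A/den)^(m-1) = -(k * ((A/den)^m)^p) := by
  have hx : 0 < A/den := div_pos hA hden
  rw [← Real.rpow_mul hx.le, hmp]
  have h2 : (A/den)^(m+1) = (A/den)^(m-1) * (A/den)^(2:ℕ) := by
    rw [← Real.rpow_natCast (A/den) 2, ← Real.rpow_add hx]
    congr 1; push_cast; ring
  rw [h2, show ((A/den):ℝ)^(2:ℕ) = A^2/den^2 by rw [div_pow]]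
  field_simp
  linear_combination hkA

set_option maxHeartbeats 2000000 in
theorem H_supersolution {p α : ℝ} (hp : 1 < p) (hα : α ∈ Set.Ioc (0:ℝ) 1) :
    ∃ C > (0:ℝ), ∃ ε₀ > (0:ℝ), ∀ ε : ℝ, 0 < ε → ε ≤ ε₀ →
      let g : ℝ → ℝ := fun t =>
        (p * (p + 1) * ε ^ (p - 1) / ((p - 1) ^ 2 * ε ^ (p - 1) * t + p ^ 2 + p)) ^ (1 / (p - 1))
      let w : ℝ → ℝ := fun t =>
        ((1:ℝ) / 2 + 1 / ((2:ℝ) ^ (1 / α) + t) ^ α) ^ (-(1 / (p - 1)))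
      let H : ℝ → ℝ := fun t => w t * g t
      ∀ t : ℝ, 0 < t →
        C * (1 + t) ^ (-(α + 1)) * H t + C * g t ^ (p - 1) * H t
          ≤ deriv (deriv H) t + deriv H t + H t ^ p := by
  obtain ⟨hα0, hα1⟩ := hα
  have hp0 : (0:ℝ) < p := lt_trans one_pos hp
  have hp1 : (0:ℝ) < p - 1 := sub_pos.2 hp
  have hm0 : (0:ℝ) < 1/(p-1) := by positivity
  set m : ℝ := 1/(p-1) with hm
  set k : ℝ := (p-1)/(p*(p+1)) with hk
  have hk0 : 0 < k := by rw [hk]; positivity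
  have hmp : m * p = m + 1 := by rw [hm]; field_simp; ring
  set c : ℝ := (2:ℝ)^(1/α) with hcdef
  have hc2 : (2:ℝ) ≤ c := by
    rw [hcdef]
    nth_rewrite 1 [← Real.rpow_one 2]
    exact Real.rpow_le_rpow_of_exponent_le (by norm_num) ((le_div_iff₀ hα0).2 (by linarith))
  have hc0 : (0:ℝ) < c := by linarith
  have hcα : c ^ α = 2 := by
    rw [hcdef, ← Real.rpow_mul (by norm_num), one_div_mul_cancel (ne_of_gt hα0), Real.rpow_one]
  refine ⟨min (m*α^2/(32*c)) (p/(p+1)), lt_min (by positivity) (by positivity), 1, one_pos, ?_⟩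
  intro ε hε hε1 g w H t ht
  have hεp : (0:ℝ) < ε^(p-1) := Real.rpow_pos_of_pos hε _
  set A : ℝ := p*(p+1)*ε^(p-1) with hAdef
  set B : ℝ := (p-1)^2*ε^(p-1) with hBdef
  have hA0 : 0 < A := by rw [hAdef]; positivity
  have hB0 : 0 < B := by rw [hBdef]; positivity
  have hkA : k*A = m*B := by
    rw [hk, hm, hAdef, hBdef]; field_simp
  have hgdef : ∀ s : ℝ, g s = (A / (B*s + p^2 + p))^m := fun s => rfl
  have hden : ∀ s : ℝ, 0 ≤ s → 0 < B*s + p^2 + p := by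
    intro s hs
    have : 0 ≤ B*s := mul_nonneg hB0.le hs
    nlinarith
  have hgpos : ∀ s : ℝ, 0 ≤ s → 0 < g s := by
    intro s hs; rw [hgdef]
    exact Real.rpow_pos_of_pos (div_pos hA0 (hden s hs)) m
  -- derivative of g
  have hg' : ∀ s : ℝ, 0 < s → HasDerivAt g (-(k * g s ^ p)) s := by
    intro s hs
    have hds := hden s hs.le
    have h1 : HasDerivAt (fun u : ℝ => B*u + p^2 + p) B s := by
      simpa using (((hasDerivAt_id s).const_mul B).add_const (p^2)).add_const p
    have h2 : HasDerivAt (fun u : ℝ => A / (B*u + p^2 + p)) (-(A*B)/(B*s+p^2+p)^2) s := by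
      have := (hasDerivAt_const s A).div h1 (ne_of_gt hds)
      convert this using 1
      · rfl
      · rfl
      · rfl
      ring
    have h3 := h2.rpow_const (p := m) (Or.inl (ne_of_gt (div_pos hA0 hds)))
    rw [hgdef s]
    have := alg1 A B (B*s+p^2+p) m k p hA0 hds hmp hkA
    rw [show (-(k * ((A / (B*s+p^2+p))^m)^p)) = (-(A*B)/(B*s+p^2+p)^2) * m * (A/(B*s+p^2+p))^(m-1) from this.symm]
    exact h3
  -- phi facts
  have hXpos : ∀ s : ℝ, 0 ≤ s → 0 < c + s := fun s hs => by linarith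
  have hXα : ∀ s : ℝ, 0 ≤ s → 0 < (c+s)^α := fun s hs => Real.rpow_pos_of_pos (hXpos s hs) α
  have hφlb : ∀ s : ℝ, 0 ≤ s → (1:ℝ)/2 < (1:ℝ)/2 + 1/(c+s)^α := by
    intro s hs
    have h := hXα s hs
    have : 0 < 1/(c+s)^α := by positivity
    linarith
  have hφub : ∀ s : ℝ, 0 ≤ s → (1:ℝ)/2 + 1/(c+s)^α ≤ 1 := by
    intro s hs
    have h2 : (2:ℝ) ≤ (c+s)^α := by
      calc (2:ℝ) = c^α := hcα.symm
      _ ≤ (c+s)^α := Real.rpow_le_rpow hc0.le (by linarith) hα0.le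
    have : 1/(c+s)^α ≤ 1/2 := by
      rw [div_le_div_iff₀ (hXα s hs) (by norm_num)]; linarith
    linarith
  have hφpos : ∀ s : ℝ, 0 ≤ s → 0 < (1:ℝ)/2 + 1/(c+s)^α :=
    fun s hs => lt_trans (by norm_num) (hφlb s hs)
  have hφ' : ∀ s : ℝ, 0 < s → HasDerivAt (fun u : ℝ => (1:ℝ)/2 + 1/(c+u)^α) (-(α * (c+s)^(-(α+1)))) s := by
    intro s hs
    have hX := hXpos s hs.le
    have hXa := hXα s hs.le
    have h1 : HasDerivAt (fun u : ℝ => c + u) 1 s := (hasDerivAt_id s).const_add c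
    have h2 : HasDerivAt (fun u : ℝ => (c+u)^α) (α * (c+s)^(α-1)) s := by
      simpa using h1.rpow_const (Or.inl (ne_of_gt hX))
    have h3 := (hasDerivAt_const s (1:ℝ)).div h2 (ne_of_gt hXa)
    have h4 := h3.const_add ((1:ℝ)/2)
    convert h4 using 1
    · rfl
    · rfl
    · rfl
    rw [show ((c+s)^α)^2 = (c+s)^(α*2) by
      rw [← Real.rpow_natCast ((c+s)^α) 2, ← Real.rpow_mul hX.le]; norm_num]
    rw [show (-(α+1)) = (α-1) - α*2 by ring, Real.rpow_sub hX]
    field_simp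
    ring
  have hw' : ∀ s : ℝ, 0 < s → HasDerivAt w (m * α * ((1:ℝ)/2 + 1/(c+s)^α)^(-(m+1)) * (c+s)^(-(α+1))) s := by
    intro s hs
    have h5 := (hφ' s hs).rpow_const (p := -m) (Or.inl (ne_of_gt (hφpos s hs.le)))
    have hwl : w = fun u : ℝ => ((1:ℝ)/2 + 1/(c+u)^α)^(-m) := rfl
    rw [hwl]
    convert h5 using 1
    rw [show (-m - 1 : ℝ) = -(m+1) by ring]
    ring
  set F : ℝ → ℝ := fun s => m * α * ((1:ℝ)/2 + 1/(c+s)^α)^(-(m+1)) * (c+s)^(-(α+1)) * g s + w s * (-(k * g s ^ p)) with hFdef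
  have hH' : ∀ s : ℝ, 0 < s → HasDerivAt H (F s) s := by
    intro s hs
    exact (hw' s hs).mul (hg' s hs)
  have hderivH : ∀ s : ℝ, 0 < s → deriv H s = F s := fun s hs => (hH' s hs).deriv
  have hdd : deriv (deriv H) t = deriv F t := by
    apply Filter.EventuallyEq.deriv_eq
    filter_upwards [Ioi_mem_nhds ht] with s hs
    exact hderivH s hs
  have hXt := hXpos t ht.le
  have hφt := hφpos t ht.le
  have a1 := (hφ' t ht).rpow_const (p := -(m+1)) (Or.inl (ne_of_gt hφt))
  have h1t : HasDerivAt (fun u : ℝ => c + u) 1 t := (hasDerivAt_id t).const_add c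
  have a2 := h1t.rpow_const (p := -(α+1)) (Or.inl (ne_of_gt hXt))
  have b3 := (((a1.const_mul (m*α)).mul a2).mul (hg' t ht))
  have c1 := (hg' t ht).rpow_const (p := p) (Or.inl (ne_of_gt (hgpos t ht.le)))
  have c4 := (hw' t ht).mul ((c1.const_mul k).neg)
  have hF'' : HasDerivAt F _ t := b3.add c4
  rw [hdd, hF''.deriv, hderivH t ht, show H t = w t * g t from rfl]
  simp only [hFdef, Pi.mul_apply, Pi.neg_apply]
  -- basic positivity at t
  have hW0 : 0 < w t := Real.rpow_pos_of_pos hφt (-m)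
  have hG0 : 0 < g t := hgpos t ht.le
  rw [Real.mul_rpow hW0.le hG0.le]
  -- rewrite exponent relations
  have f1 : ((1:ℝ)/2 + 1/(c+t)^α)^(-(m+1)) = w t * ((1:ℝ)/2 + 1/(c+t)^α)⁻¹ := by
    rw [show (-(m+1):ℝ) = -m + -1 by ring, Real.rpow_add hφt, Real.rpow_neg_one]
  have f2 : ((1:ℝ)/2 + 1/(c+t)^α)^(-(m+1)-1) = w t * ((1:ℝ)/2 + 1/(c+t)^α)⁻¹ * ((1:ℝ)/2 + 1/(c+t)^α)⁻¹ := by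
    rw [show (-(m+1)-1:ℝ) = -m + -1 + -1 by ring, Real.rpow_add hφt, Real.rpow_add hφt,
      Real.rpow_neg_one]
  have f3 : (c+t)^(-(α+1)-1) = (c+t)^(-(α+1)) * (c+t)⁻¹ := by
    rw [show (-(α+1)-1:ℝ) = -(α+1) + -1 by ring, Real.rpow_add hXt, Real.rpow_neg_one]
  have f4 : w t ^ p = w t * ((1:ℝ)/2 + 1/(c+t)^α)⁻¹ := by
    have hwt : w t = ((1:ℝ)/2 + 1/(c+t)^α)^(-m) := rfl
    rw [hwt, ← Real.rpow_mul hφt.le,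
      show (-m*p : ℝ) = -m + -1 by linear_combination -hmp, Real.rpow_add hφt, Real.rpow_neg_one]
  have f5 : g t ^ (p-1) * g t = g t ^ p := by
    nth_rewrite 2 [← Real.rpow_one (g t)]
    rw [← Real.rpow_add hG0]
    norm_num
  rw [f2, f3, f4, f1]
  set W : ℝ := w t with hWs
  set G : ℝ := g t with hGs
  set J : ℝ := ((1:ℝ)/2 + 1/(c+t)^α)⁻¹ with hJs
  set PP : ℝ := (c+t)^(-(α+1)) with hPPs
  set XI : ℝ := (c+t)⁻¹ with hXIs
  set Y : ℝ := (1+t)^(-(α+1)) with hYs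
  -- scalar facts
  have hJ0 : 0 < J := by rw [hJs]; exact inv_pos.2 hφt
  have hJ1 : 1 ≤ J := by rw [hJs]; exact (one_le_inv₀ hφt).2 (hφub t ht.le)
  clear hF'' c4 c1 b3 a2 a1 h1t hdd hderivH hH' hw' hφ' hg' hgdef hden f1 f2 f3 f4
  clear hFdef F
  clear_value W G J PP XI Y
  clear hkA hAdef hBdef hgpos hXpos hXα hφlb hφub hφpos hεp hε hε1 hA0 hB0
  clear hWs hGs
  clear A B H w g ε
  clear_value m k c
  have hPP0 : 0 < PP := by rw [hPPs]; exact Real.rpow_pos_of_pos hXt _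
  have hY0 : 0 < Y := by rw [hYs]; exact Real.rpow_pos_of_pos (by linarith) _
  have hXI0 : 0 < XI := by rw [hXIs]; exact inv_pos.2 hXt
  have hcP : c^(-(α+1)) = 1/(2*c) := by
    rw [show (-(α+1):ℝ) = -α + -1 by ring, Real.rpow_add hc0, Real.rpow_neg_one,
      Real.rpow_neg hc0.le, hcα, one_div, mul_inv]
  have hPPub : PP ≤ 1/(2*c) := by
    rw [hPPs, ← hcP]
    exact Real.rpow_le_rpow_of_nonpos hc0 (by linarith) (by linarith)
  have hPPlb : 1/(2*c)*Y ≤ PP := by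
    have hct : c + t ≤ c*(1+t) := by nlinarith
    have h1 : (c*(1+t))^(-(α+1)) ≤ PP := by
      rw [hPPs]
      exact Real.rpow_le_rpow_of_nonpos hXt hct (by linarith)
    calc 1/(2*c)*Y = c^(-(α+1)) * (1+t)^(-(α+1)) := by rw [hcP, hYs]
      _ = (c*(1+t))^(-(α+1)) := (Real.mul_rpow hc0.le (by linarith)).symm
      _ ≤ PP := h1
  have hPP4 : PP ≤ 1/4 := by
    refine hPPub.trans ?_
    rw [div_le_div_iff₀ (by positivity) (by norm_num)]
    linarith
  have hαPP : α*PP ≤ 1/4 := by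
    calc α*PP ≤ 1*PP := mul_le_mul_of_nonneg_right hα1 hPP0.le
      _ = PP := one_mul _
      _ ≤ 1/4 := hPP4
  have hXIa : (α+1)*XI ≤ 1 := by
    rw [hXIs, ← div_eq_mul_inv, div_le_one hXt]
    linarith
  set GP : ℝ := G^p with hGPs
  set GQ : ℝ := G^(p-1) with hGQs
  have hGP0 : 0 < GP := by rw [hGPs]; exact Real.rpow_pos_of_pos hG0 _
  have hGQ0 : 0 < GQ := by rw [hGQs]; exact Real.rpow_pos_of_pos hG0 _
  clear_value GP GQ
  clear hGPs hGQs
  have S1 : m*(α*α)/16*(PP*W) ≤ m*α*(m+1)*α*(W*J*J)*PP*PP - m*α*(α+1)*(W*J)*(PP*XI) + m*α*(W*J)*PP := by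
    rcases le_or_gt (2*(α+1)) (c+t) with hcase | hcase
    · have hXIb : (α+1)*XI ≤ 1/2 := by
        rw [hXIs, ← div_eq_mul_inv, div_le_div_iff₀ hXt (by norm_num)]
        linarith
      have h1 : 0 ≤ m*α*(m+1)*α*(W*J*J)*PP*PP := by positivity
      have h2 : 0 ≤ m*α*(W*J)*PP*(1/2 - (α+1)*XI) :=
        mul_nonneg (by positivity) (by linarith)
      have h3 : 0 ≤ m*α*(W*PP)*(J-1) := mul_nonneg (by positivity) (by linarith)
      have h4 : 0 ≤ m*α*(W*PP)*(8-α) := mul_nonneg (by positivity) (by linarith)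
      linarith only [h1, h2, h3, h4]
    · have h16 : 1/16 ≤ PP := by
        rw [hPPs]
        have e4 : (4:ℝ)^(-2:ℝ) = 1/16 := by
          rw [show (-2:ℝ) = ((-2:ℤ):ℝ) by norm_num, Real.rpow_intCast]
          norm_num
        calc (1:ℝ)/16 = (4:ℝ)^(-2:ℝ) := e4.symm
          _ ≤ (4:ℝ)^(-(α+1)) :=
            Real.rpow_le_rpow_of_exponent_le (by norm_num) (by linarith)
          _ ≤ (c+t)^(-(α+1)) :=
            Real.rpow_le_rpow_of_nonpos hXt (by linarith) (by linarith)
      have h2 : 0 ≤ m*α*(W*J)*PP*(1 - (α+1)*XI) :=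
        mul_nonneg (by positivity) (by linarith)
      have h5 : 0 ≤ m*(α*α)*(W*(PP*PP))*((m+1)*(J*J)-1) := by
        have e5 : 1 ≤ (m+1)*(J*J) := by
          have hJJ : 1*1 ≤ J*J := mul_le_mul hJ1 hJ1 (by norm_num) hJ0.le
          have hm1 : 1 ≤ m+1 := by linarith
          calc (1:ℝ) = 1*1 := by norm_num
            _ ≤ 1*(J*J) := by linarith [hJJ]
            _ ≤ (m+1)*(J*J) := mul_le_mul_of_nonneg_right hm1 (by linarith)
        exact mul_nonneg (by positivity) (by linarith)
      have h6 : 0 ≤ m*(α*α)*(W*PP)*(PP - 1/16) := mul_nonneg (by positivity) (by linarith)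
      linarith only [h2, h5, h6]
  have hkm : k*m = 1/(p*(p+1)) := by rw [hk, hm]; field_simp
  have hpq : (0:ℝ) < p*(p+1) := by positivity
  have hu0 : 0 ≤ k*m*(α*PP) := by positivity
  have huub : k*m*(α*PP) ≤ 1/(4*(p*(p+1))) := by
    calc k*m*(α*PP) = (α*PP)/(p*(p+1)) := by rw [hkm]; ring
      _ ≤ (1/4)/(p*(p+1)) := by gcongr
      _ = 1/(4*(p*(p+1))) := by rw [div_div]
  have huc : k*m*(α*PP)*(4*(p*(p+1))) ≤ 1 := by
    rw [← le_div_iff₀ (by positivity)]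
    exact huub
  have e1 : k*(p*(p+1)) = p-1 := by rw [hk]; field_simp
  have hu12 : (0:ℝ) ≤ 1-2*(k*m*(α*PP)) := by nlinarith
  have Pineq : p*p ≤ (J*(1-2*(k*m*(α*PP))) - k)*(p+1)*p := by
    linarith only [mul_nonneg (mul_nonneg (sub_nonneg.2 hJ1) hu12) hpq.le, huc, e1]
  have Hineq : p/(p+1) ≤ J*(1-2*(k*m*(α*PP))) - k := by
    rw [div_le_iff₀ (by linarith : (0:ℝ) < p+1)]
    nlinarith [Pineq, hp0, hp1]
  have S2 : (p/(p+1))*W ≤ W*J - k*W - 2*k*(m*α*(W*J)*PP) := by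
    calc (p/(p+1))*W ≤ (J*(1-2*(k*m*(α*PP))) - k)*W := mul_le_mul_of_nonneg_right Hineq hW0.le
      _ = W*J - k*W - 2*k*(m*α*(W*J)*PP) := by ring
  have hmin1 : (m*α^2/(32*c) ⊓ p/(p+1)) ≤ m*α^2/(32*c) := min_le_left _ _
  have hmin2 : (m*α^2/(32*c) ⊓ p/(p+1)) ≤ p/(p+1) := min_le_right _ _
  have hWG : (0:ℝ) ≤ W*G := by positivity
  have key1 : (m*α^2/(32*c) ⊓ p/(p+1)) * Y * (W*G) ≤
      (m*α*(m+1)*α*(W*J*J)*PP*PP - m*α*(α+1)*(W*J)*(PP*XI) + m*α*(W*J)*PP) * G := by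
    calc (m*α^2/(32*c) ⊓ p/(p+1)) * Y * (W*G) ≤ (m*α^2/(32*c)) * Y * (W*G) :=
          mul_le_mul_of_nonneg_right (mul_le_mul_of_nonneg_right hmin1 hY0.le) hWG
      _ = (m*(α*α)/16)*(W*G)*((1/(2*c))*Y) := by ring
      _ ≤ (m*(α*α)/16)*(W*G)*PP := by
          apply mul_le_mul_of_nonneg_left hPPlb (by positivity)
      _ = (m*(α*α)/16*(PP*W))*G := by ring
      _ ≤ (m*α*(m+1)*α*(W*J*J)*PP*PP - m*α*(α+1)*(W*J)*(PP*XI) + m*α*(W*J)*PP) * G :=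
          mul_le_mul_of_nonneg_right S1 hG0.le
  have key2 : (m*α^2/(32*c) ⊓ p/(p+1)) * GQ * (W*G) ≤ (W*J - k*W - 2*k*(m*α*(W*J)*PP)) * GP := by
    calc (m*α^2/(32*c) ⊓ p/(p+1)) * GQ * (W*G) ≤ (p/(p+1)) * GQ * (W*G) :=
          mul_le_mul_of_nonneg_right (mul_le_mul_of_nonneg_right hmin2 hGQ0.le) hWG
      _ = ((p/(p+1))*W)*(GQ*G) := by ring
      _ = ((p/(p+1))*W)*GP := by rw [f5]
      _ ≤ (W*J - k*W - 2*k*(m*α*(W*J)*PP))*GP := mul_le_mul_of_nonneg_right S2 hGP0.le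
  have knn : 0 ≤ k*k*p*W*(GP*GQ) := by positivity
  linarith only [key1, key2, knn]
end

section
/- Under the hypotheses of the preceding statement (p > 1, α ∈ (0,1], ε > 0 small, H = wg), H satisfies H(0) = ε, H'(0) = (α/((p−1) 2^{(α+1)/α})) ε − ((p−1)/(p(p+1))) ε^p, and H'(t) + (1/2) H(t) ≥ 0 for all t ≥ 0. -/
open Real

set_option maxHeartbeats 1600000 in
theorem H_initial_conditions {p α ε : ℝ} (hp : 1 < p) (hα : α ∈ Set.Ioc (0:ℝ) 1)
    (hε : 0 < ε) (hsmall : (p - 1) / (p * (p + 1)) * ε ^ (p - 1) ≤ 1 / 2) :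
    let g : ℝ → ℝ := fun t =>
      (p * (p + 1) * ε ^ (p - 1) / ((p - 1) ^ 2 * ε ^ (p - 1) * t + p ^ 2 + p)) ^ (1 / (p - 1))
    let w : ℝ → ℝ := fun t =>
      ((1:ℝ) / 2 + 1 / ((2:ℝ) ^ (1 / α) + t) ^ α) ^ (-(1 / (p - 1)))
    let H : ℝ → ℝ := fun t => w t * g t
    H 0 = ε ∧
    deriv H 0 = (α / ((p - 1) * (2:ℝ) ^ ((α + 1) / α))) * ε - ((p - 1) / (p * (p + 1))) * ε ^ p ∧
    ∀ t : ℝ, 0 ≤ t → 0 ≤ deriv H t + (1 / 2) * H t := by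
  intro g w H
  obtain ⟨hα0, hα1⟩ := hα
  have hα0' : α ≠ 0 := ne_of_gt hα0
  have hp0 : (0:ℝ) < p := by linarith
  have hp1 : (0:ℝ) < p - 1 := by linarith
  have hp1' : p - 1 ≠ 0 := ne_of_gt hp1
  have hc : 0 < ε ^ (p - 1) := Real.rpow_pos_of_pos hε _
  have hs : 0 < (2:ℝ) ^ (1/α) := Real.rpow_pos_of_pos two_pos _
  have hA : 0 < p * (p + 1) * ε ^ (p - 1) :=
    mul_pos (mul_pos hp0 (by linarith)) hc
  have hB : 0 < (p - 1) ^ 2 * ε ^ (p - 1) := mul_pos (by positivity) hc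
  -- key derivative formula for t ≥ 0
  have key : ∀ t : ℝ, 0 ≤ t →
      HasDerivAt H
        (H t * ((1/(p-1)) * α * ((2:ℝ)^(1/α) + t)^(α-1) / (((2:ℝ)^(1/α) + t)^α)^2
            / (1/2 + 1/((2:ℝ)^(1/α) + t)^α)
          - (1/(p-1)) * ((p-1)^2 * ε^(p-1)) / ((p-1)^2 * ε^(p-1) * t + p^2 + p))) t := by
    intro t ht
    have hE : 0 < (p-1)^2 * ε^(p-1) * t + p^2 + p := by nlinarith [mul_nonneg hB.le ht]
    have hI : 0 < p * (p + 1) * ε ^ (p - 1) / ((p-1)^2 * ε^(p-1) * t + p^2 + p) :=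
      div_pos hA hE
    have hst : 0 < (2:ℝ)^(1/α) + t := by linarith
    have hstα : 0 < ((2:ℝ)^(1/α) + t)^α := Real.rpow_pos_of_pos hst _
    have hu : 0 < 1/2 + 1/((2:ℝ)^(1/α) + t)^α := by positivity
    -- derivative of g
    have hEderiv : HasDerivAt (fun t : ℝ => (p-1)^2 * ε^(p-1) * t + p^2 + p)
        ((p-1)^2 * ε^(p-1)) t := by
      simpa using (((hasDerivAt_id t).const_mul ((p-1)^2 * ε^(p-1))).add_const
        (p^2)).add_const p
    have hIderiv : HasDerivAt
        (fun t : ℝ => p * (p + 1) * ε ^ (p - 1) / ((p-1)^2 * ε^(p-1) * t + p^2 + p))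
        (p * (p + 1) * ε ^ (p - 1) *
          (-((p-1)^2 * ε^(p-1)) / ((p-1)^2 * ε^(p-1) * t + p^2 + p)^2)) t := by
      simpa [div_eq_mul_inv] using (hEderiv.inv (ne_of_gt hE)).const_mul
        (p * (p + 1) * ε ^ (p - 1))
    have hgderiv : HasDerivAt g
        (g t * (-((1/(p-1)) * ((p-1)^2 * ε^(p-1)) / ((p-1)^2 * ε^(p-1) * t + p^2 + p)))) t := by
      have h1 := hIderiv.rpow_const (p := 1/(p-1)) (Or.inl (ne_of_gt hI))
      convert h1 using 1
      rw [Real.rpow_sub_one (ne_of_gt hI)]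
      show _ = _ * _ * ((_ / _) ^ (1/(p-1)) / (_ / _))
      simp only [g]
      field_simp
    -- derivative of w
    have hPderiv : HasDerivAt (fun t : ℝ => ((2:ℝ)^(1/α) + t)^α)
        (α * ((2:ℝ)^(1/α) + t)^(α-1)) t := by
      have := (((hasDerivAt_id t).const_add ((2:ℝ)^(1/α)))).rpow_const
        (p := α) (Or.inl (ne_of_gt hst))
      simpa using this
    have huderiv : HasDerivAt (fun t : ℝ => 1/2 + 1/((2:ℝ)^(1/α) + t)^α)
        (-(α * ((2:ℝ)^(1/α) + t)^(α-1)) / (((2:ℝ)^(1/α) + t)^α)^2) t := by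
      simpa [one_div] using (hPderiv.inv (ne_of_gt hstα)).const_add (1/2 : ℝ)
    have hwderiv : HasDerivAt w
        (w t * ((1/(p-1)) * α * ((2:ℝ)^(1/α) + t)^(α-1) / (((2:ℝ)^(1/α) + t)^α)^2
          / (1/2 + 1/((2:ℝ)^(1/α) + t)^α))) t := by
      have h1 := huderiv.rpow_const (p := -(1/(p-1))) (Or.inl (ne_of_gt hu))
      convert h1 using 1
      rw [Real.rpow_sub_one (ne_of_gt hu)]
      show ((1:ℝ)/2 + 1/((2:ℝ)^(1/α) + t)^α) ^ (-(1/(p-1))) *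
        ((1/(p-1)) * α * ((2:ℝ)^(1/α) + t)^(α-1) / (((2:ℝ)^(1/α) + t)^α)^2
          / (1/2 + 1/((2:ℝ)^(1/α) + t)^α)) = _
      set U : ℝ := (1:ℝ)/2 + 1/((2:ℝ)^(1/α) + t)^α with hUdef
      set P1 : ℝ := ((2:ℝ)^(1/α) + t)^(α-1) with hP1def
      set Pα : ℝ := ((2:ℝ)^(1/α) + t)^α with hPαdef
      set W : ℝ := U ^ (-(1/(p-1))) with hWdef
      field_simp
    have hH : HasDerivAt H _ t := hwderiv.mul hgderiv
    convert hH using 1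
    show H t * _ = _ * g t + w t * _
    show w t * g t * _ = _
    ring
  have hsα : ((2:ℝ)^(1/α))^α = 2 := by
    rw [← Real.rpow_mul (by norm_num : (0:ℝ) ≤ 2), one_div, inv_mul_cancel₀ hα0',
      Real.rpow_one]
  have hw0 : w 0 = 1 := by
    show ((1:ℝ)/2 + 1/((2:ℝ)^(1/α) + 0)^α) ^ (-(1/(p-1))) = 1
    rw [add_zero, hsα]
    norm_num
  have hg0 : g 0 = ε := by
    show (p*(p+1)*ε^(p-1) / ((p-1)^2*ε^(p-1)*0 + p^2 + p)) ^ (1/(p-1)) = ε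
    rw [mul_zero, zero_add, show p^2+p = p*(p+1) by ring,
      mul_div_cancel_left₀ _ (ne_of_gt (mul_pos hp0 (by linarith : (0:ℝ) < p+1))),
      ← Real.rpow_mul hε.le, mul_one_div_cancel hp1', Real.rpow_one]
  have hH0 : H 0 = ε := by
    show w 0 * g 0 = ε
    rw [hw0, hg0, one_mul]
  refine ⟨hH0, ?_, ?_⟩
  · rw [(key 0 le_rfl).deriv, hH0]
    rw [add_zero, mul_zero, zero_add, hsα]
    have hsα1 : ((2:ℝ)^(1/α))^(α-1) = (2:ℝ)^((α-1)/α) := by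
      rw [← Real.rpow_mul (by norm_num : (0:ℝ) ≤ 2)]
      congr 1
      field_simp
    have h4 : (2:ℝ)^((α+1)/α) * (2:ℝ)^((α-1)/α) = 4 := by
      rw [← Real.rpow_add two_pos, show (α+1)/α + (α-1)/α = 2 by field_simp; ring,
        show (2:ℝ) = ((2:ℕ):ℝ) by norm_num, Real.rpow_natCast]
      norm_num
    have hX : (0:ℝ) < (2:ℝ)^((α-1)/α) := Real.rpow_pos_of_pos two_pos _
    have hY : (2:ℝ)^((α+1)/α) = 4 / (2:ℝ)^((α-1)/α) := by
      rw [eq_div_iff (ne_of_gt hX)]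
      exact h4
    have hεp : ε ^ p = ε ^ (p-1) * ε := by
      rw [← Real.rpow_add_one (ne_of_gt hε) (p-1)]
      ring_nf
    rw [hsα1, hY, hεp]
    field_simp
    ring
  · intro t ht
    rw [(key t ht).deriv]
    have hE : 0 < (p-1)^2 * ε^(p-1) * t + p^2 + p := by nlinarith [mul_nonneg hB.le ht]
    have hst : 0 < (2:ℝ)^(1/α) + t := by linarith
    have hstα : 0 < ((2:ℝ)^(1/α) + t)^α := Real.rpow_pos_of_pos hst _
    have hu : 0 < 1/2 + 1/((2:ℝ)^(1/α) + t)^α := by positivity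
    have hHt : 0 < H t := by
      have hwt : (0:ℝ) < w t := Real.rpow_pos_of_pos hu _
      have hgt : (0:ℝ) < g t :=
        Real.rpow_pos_of_pos (div_pos hA hE) _
      exact mul_pos hwt hgt
    have hF1 : (0:ℝ) ≤ (1/(p-1)) * α * ((2:ℝ)^(1/α) + t)^(α-1) / (((2:ℝ)^(1/α) + t)^α)^2
        / (1/2 + 1/((2:ℝ)^(1/α) + t)^α) :=
      le_of_lt (div_pos (div_pos (mul_pos (mul_pos (div_pos one_pos hp1) hα0)
        (Real.rpow_pos_of_pos hst _)) (pow_pos hstα 2)) hu)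
    have hF2 : (1/(p-1)) * ((p-1)^2 * ε^(p-1)) / ((p-1)^2 * ε^(p-1) * t + p^2 + p) ≤ 1/2 := by
      rw [div_le_iff₀ hE, show (1/(p-1)) * ((p-1)^2 * ε^(p-1)) = (p-1) * ε^(p-1) by
        field_simp]
      have h1 : (p-1) * ε^(p-1) ≤ p*(p+1)/2 := by
        rw [div_mul_eq_mul_div, div_le_iff₀ (by nlinarith : (0:ℝ) < p*(p+1))] at hsmall
        linarith
      nlinarith [mul_nonneg hB.le ht]
    have hgen : ∀ h f1 f2 : ℝ, 0 ≤ h → 0 ≤ f1 → f2 ≤ 1/2 → 0 ≤ h * (f1 - f2) + 1/2 * h := by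
      intro h f1 f2 h0 h1 h2
      nlinarith
    exact hgen (H t) _ _ hHt.le hF1 hF2
end

section
/- Let p > 1, ε > 0, t > 0, and let g(t,ε), w(t), H(t,ε) = w(t)g(t,ε) be as above. Then ∂_ε H(t,ε) = H(t,ε) g(t,ε)^{p−1} ε^{−p} and ∂_ε² H(t,ε) = ( p g(t,ε)^{2p−2} ε^{−2p} − p g(t,ε)^{p−1} ε^{−p−1} ) H(t,ε) ≤ 0. -/
open Real

private lemma denom_pos {p t e : ℝ} (hp : 1 < p) (ht : 0 < t) (he : 0 < e) :
    0 < (p - 1) ^ 2 * e ^ (p - 1) * t + p ^ 2 + p := by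
  have h1 : 0 < e ^ (p - 1) := Real.rpow_pos_of_pos he _
  have h2 : 0 < (p - 1) ^ 2 := by nlinarith
  nlinarith [mul_pos (mul_pos h2 h1) ht]

private lemma f_pos {p t e : ℝ} (hp : 1 < p) (ht : 0 < t) (he : 0 < e) :
    0 < p * (p + 1) * e ^ (p - 1) / ((p - 1) ^ 2 * e ^ (p - 1) * t + p ^ 2 + p) := by
  have h1 : 0 < e ^ (p - 1) := Real.rpow_pos_of_pos he _
  have := denom_pos hp ht he
  have : 0 < p * (p + 1) := by nlinarith
  positivity

private lemma f_le {p t e : ℝ} (hp : 1 < p) (ht : 0 < t) (he : 0 < e) :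
    p * (p + 1) * e ^ (p - 1) / ((p - 1) ^ 2 * e ^ (p - 1) * t + p ^ 2 + p) ≤ e ^ (p - 1) := by
  have h1 : 0 < e ^ (p - 1) := Real.rpow_pos_of_pos he _
  have hd := denom_pos hp ht he
  rw [div_le_iff₀ hd]
  nlinarith [mul_pos (mul_pos (sq_nonneg (p-1) |>.lt_of_ne (by nlinarith)) h1) ht,
    sq_nonneg (p - 1), mul_pos h1 h1]

private lemma f_hasDeriv {p t e : ℝ} (hp : 1 < p) (ht : 0 < t) (he : 0 < e) :
    HasDerivAt (fun x : ℝ => p * (p + 1) * x ^ (p - 1) / ((p - 1) ^ 2 * x ^ (p - 1) * t + p ^ 2 + p))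
      ((p - 1) * (p * (p + 1) * e ^ (p - 1) / ((p - 1) ^ 2 * e ^ (p - 1) * t + p ^ 2 + p)) ^ 2
        * e ^ (-p)) e := by
  have hd := denom_pos hp ht he
  have hrp : HasDerivAt (fun x : ℝ => x ^ (p - 1)) ((p - 1) * e ^ (p - 1 - 1)) e :=
    Real.hasDerivAt_rpow_const (Or.inl he.ne')
  have hu : HasDerivAt (fun x : ℝ => p * (p + 1) * x ^ (p - 1))
      (p * (p + 1) * ((p - 1) * e ^ (p - 1 - 1))) e := hrp.const_mul _
  have hv : HasDerivAt (fun x : ℝ => (p - 1) ^ 2 * x ^ (p - 1) * t + p ^ 2 + p)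
      ((p - 1) ^ 2 * ((p - 1) * e ^ (p - 1 - 1)) * t) e :=
    (((hrp.const_mul ((p - 1) ^ 2)).mul_const t).add_const (p ^ 2)).add_const p
  have hq := hu.div hv hd.ne'
  refine hq.congr_deriv ?_
  symm
  have h1 : e ^ (p - 1 - 1) = e ^ (p - 1) * e⁻¹ := by
    rw [show p - 1 - 1 = (p - 1) + (-1) by ring, Real.rpow_add he, Real.rpow_neg_one]
  have h2 : e ^ (-p) = (e ^ (p - 1))⁻¹ * e⁻¹ := by
    rw [show -p = (-(p - 1)) + (-1) by ring, Real.rpow_add he, Real.rpow_neg_one,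
      Real.rpow_neg he.le]
  rw [h1, h2]
  have hX : (0:ℝ) < e ^ (p - 1) := Real.rpow_pos_of_pos he _
  field_simp
  ring


private lemma alg1_s14 {F e p : ℝ} (hfp : 0 < F) (hp : 1 < p) :
    (p - 1) * F ^ 2 * e ^ (-p) * (1 / (p - 1)) * F ^ (1 / (p - 1) - 1)
      = F ^ (p / (p - 1)) * e ^ (-p) := by
  have hp1 : (0:ℝ) < p - 1 := by linarith
  have h1 : F ^ (1 / (p - 1) - 1) = F ^ (1 / (p - 1)) * F⁻¹ := by
    rw [show 1 / (p - 1) - 1 = 1 / (p - 1) + (-1) by ring, Real.rpow_add hfp, Real.rpow_neg_one]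
  have h2 : F ^ (p / (p - 1)) = F ^ (1 / (p - 1)) * F := by
    rw [show p / (p - 1) = 1 / (p - 1) + 1 by field_simp; ring, Real.rpow_add hfp, Real.rpow_one]
  rw [h1, h2]
  field_simp

private lemma g_hasDeriv {p t e : ℝ} (hp : 1 < p) (ht : 0 < t) (he : 0 < e) :
    HasDerivAt (fun x : ℝ =>
        (p * (p + 1) * x ^ (p - 1) / ((p - 1) ^ 2 * x ^ (p - 1) * t + p ^ 2 + p)) ^ (1 / (p - 1)))
      ((p * (p + 1) * e ^ (p - 1) / ((p - 1) ^ 2 * e ^ (p - 1) * t + p ^ 2 + p)) ^ (p / (p - 1))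
        * e ^ (-p)) e := by
  have hfp := f_pos hp ht he
  have h := (f_hasDeriv hp ht he).rpow_const (p := 1 / (p - 1)) (Or.inl hfp.ne')
  exact (alg1_s14 hfp hp) ▸ h

theorem H_eps_derivatives {p α ε t : ℝ} (hp : 1 < p) (hα : α ∈ Set.Ioc (0:ℝ) 1)
    (hε : 0 < ε) (ht : 0 < t) :
    let g : ℝ → ℝ → ℝ := fun t ε =>
      (p * (p + 1) * ε ^ (p - 1) / ((p - 1) ^ 2 * ε ^ (p - 1) * t + p ^ 2 + p)) ^ (1 / (p - 1))
    let w : ℝ → ℝ := fun t =>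
      ((1:ℝ) / 2 + 1 / ((2:ℝ) ^ (1 / α) + t) ^ α) ^ (-(1 / (p - 1)))
    let H : ℝ → ℝ → ℝ := fun t ε => w t * g t ε
    deriv (fun e => H t e) ε = H t ε * g t ε ^ (p - 1) * ε ^ (-p) ∧
    deriv (deriv (fun e => H t e)) ε
        = (p * g t ε ^ (2 * p - 2) * ε ^ (-(2 * p)) - p * g t ε ^ (p - 1) * ε ^ (-(p + 1)))
            * H t ε ∧
    deriv (deriv (fun e => H t e)) ε ≤ 0 := by
  intro g w H
  have hp1 : (0:ℝ) < p - 1 := by linarith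
  obtain ⟨hα0, hα1⟩ := hα
  have hb : 0 < (1:ℝ) / 2 + 1 / ((2:ℝ) ^ (1 / α) + t) ^ α := by
    have h2a : 0 < ((2:ℝ) ^ (1 / α) + t) ^ α :=
      Real.rpow_pos_of_pos (by positivity) α
    positivity
  have hW : 0 < w t := Real.rpow_pos_of_pos hb _
  obtain ⟨F, hF⟩ : ∃ F : ℝ, F = p * (p + 1) * ε ^ (p - 1) /
      ((p - 1) ^ 2 * ε ^ (p - 1) * t + p ^ 2 + p) := ⟨_, rfl⟩
  have hfp : 0 < F := hF ▸ f_pos hp ht hε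
  have hfle : F ≤ ε ^ (p - 1) := hF ▸ f_le hp ht hε
  have hGp1 : (F ^ (1 / (p - 1))) ^ (p - 1) = F := by
    rw [← Real.rpow_mul hfp.le, show 1 / (p - 1) * (p - 1) = 1 by field_simp <;> ring,
      Real.rpow_one]
  have hG2 : (F ^ (1 / (p - 1))) ^ (2 * p - 2) = F ^ 2 := by
    rw [← Real.rpow_mul hfp.le, show 1 / (p - 1) * (2 * p - 2) = 2 by
        rw [div_mul_eq_mul_div, div_eq_iff hp1.ne']; ring,
      show (2:ℝ) = ((2:ℕ):ℝ) by norm_num, Real.rpow_natCast]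
  have hFg : F ^ (p / (p - 1)) = F ^ (1 / (p - 1)) * F := by
    rw [show p / (p - 1) = 1 / (p - 1) + 1 by field_simp; ring, Real.rpow_add hfp, Real.rpow_one]
  have hFm : F ^ (p / (p - 1) - 1) = F ^ (1 / (p - 1)) := by
    rw [show p / (p - 1) - 1 = 1 / (p - 1) by field_simp <;> ring]
  -- first derivative
  have hd1 : HasDerivAt (fun e => H t e) (w t * (F ^ (p / (p - 1)) * ε ^ (-p))) ε := by
    rw [hF]; exact (g_hasDeriv hp ht hε).const_mul (w t)
  have key1 : deriv (fun e => H t e) ε = H t ε * g t ε ^ (p - 1) * ε ^ (-p) := by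
    have e2 : H t ε * g t ε ^ (p - 1) * ε ^ (-p) = w t * (F ^ (p / (p - 1)) * ε ^ (-p)) := by
      show w t * (p * (p + 1) * ε ^ (p - 1) / ((p - 1) ^ 2 * ε ^ (p - 1) * t + p ^ 2 + p))
          ^ (1 / (p - 1)) *
        ((p * (p + 1) * ε ^ (p - 1) / ((p - 1) ^ 2 * ε ^ (p - 1) * t + p ^ 2 + p))
          ^ (1 / (p - 1))) ^ (p - 1) * ε ^ (-p) = _
      rw [← hF, hGp1, hFg]; ring
    exact hd1.deriv.trans e2.symm
  -- second derivative
  have heq : deriv (fun e => H t e) =ᶠ[nhds ε] fun x =>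
      w t * ((p * (p + 1) * x ^ (p - 1) / ((p - 1) ^ 2 * x ^ (p - 1) * t + p ^ 2 + p))
        ^ (p / (p - 1)) * x ^ (-p)) := by
    filter_upwards [eventually_gt_nhds hε] with x hx
    exact ((g_hasDeriv hp ht hx).const_mul (w t)).deriv
  have h1 := (f_hasDeriv hp ht hε).rpow_const (p := p / (p - 1))
    (Or.inl (f_pos hp ht hε).ne')
  have h2 : HasDerivAt (fun x : ℝ => x ^ (-p)) (-p * ε ^ (-p - 1)) ε :=
    Real.hasDerivAt_rpow_const (Or.inl hε.ne')
  have h3 := (h1.mul h2).const_mul (w t)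
  have etar : (p * g t ε ^ (2 * p - 2) * ε ^ (-(2 * p)) - p * g t ε ^ (p - 1) * ε ^ (-(p + 1)))
          * H t ε
      = w t * ((p - 1) * (p * (p + 1) * ε ^ (p - 1) /
            ((p - 1) ^ 2 * ε ^ (p - 1) * t + p ^ 2 + p)) ^ 2 * ε ^ (-p) * (p / (p - 1))
            * (p * (p + 1) * ε ^ (p - 1) / ((p - 1) ^ 2 * ε ^ (p - 1) * t + p ^ 2 + p))
              ^ (p / (p - 1) - 1) * ε ^ (-p)
          + (p * (p + 1) * ε ^ (p - 1) / ((p - 1) ^ 2 * ε ^ (p - 1) * t + p ^ 2 + p))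
              ^ (p / (p - 1)) * (-p * ε ^ (-p - 1))) := by
    show (p * ((p * (p + 1) * ε ^ (p - 1) / ((p - 1) ^ 2 * ε ^ (p - 1) * t + p ^ 2 + p))
          ^ (1 / (p - 1))) ^ (2 * p - 2) * ε ^ (-(2 * p))
        - p * ((p * (p + 1) * ε ^ (p - 1) / ((p - 1) ^ 2 * ε ^ (p - 1) * t + p ^ 2 + p))
          ^ (1 / (p - 1))) ^ (p - 1) * ε ^ (-(p + 1)))
        * (w t * (p * (p + 1) * ε ^ (p - 1) / ((p - 1) ^ 2 * ε ^ (p - 1) * t + p ^ 2 + p))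
          ^ (1 / (p - 1))) = _
    rw [← hF, hG2, hGp1, hFm, hFg,
      show -(2 * p) = -p + -p by ring, Real.rpow_add hε,
      show -(p + 1) = -p - 1 by ring]
    field_simp
    ring
  have key2 : deriv (deriv (fun e => H t e)) ε
      = (p * g t ε ^ (2 * p - 2) * ε ^ (-(2 * p)) - p * g t ε ^ (p - 1) * ε ^ (-(p + 1)))
          * H t ε :=
    heq.deriv_eq.trans (h3.deriv.trans etar.symm)
  refine ⟨key1, key2, ?_⟩
  rw [key2]
  show (p * ((p * (p + 1) * ε ^ (p - 1) / ((p - 1) ^ 2 * ε ^ (p - 1) * t + p ^ 2 + p))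
        ^ (1 / (p - 1))) ^ (2 * p - 2) * ε ^ (-(2 * p))
      - p * ((p * (p + 1) * ε ^ (p - 1) / ((p - 1) ^ 2 * ε ^ (p - 1) * t + p ^ 2 + p))
        ^ (1 / (p - 1))) ^ (p - 1) * ε ^ (-(p + 1)))
      * (w t * (p * (p + 1) * ε ^ (p - 1) / ((p - 1) ^ 2 * ε ^ (p - 1) * t + p ^ 2 + p))
        ^ (1 / (p - 1))) ≤ 0
  rw [← hF, hG2, hGp1]
  apply mul_nonpos_of_nonpos_of_nonneg
  · rw [show -(2 * p) = -(p + 1) + -(p - 1) by ring, Real.rpow_add hε]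
    have hE1 : (0:ℝ) < ε ^ (-(p + 1)) := Real.rpow_pos_of_pos hε _
    have hXpos : (0:ℝ) < ε ^ (p - 1) := Real.rpow_pos_of_pos hε _
    have hFE : F * ε ^ (-(p - 1)) ≤ 1 := by
      rw [Real.rpow_neg hε.le, ← div_eq_mul_inv]
      exact (div_le_one hXpos).mpr hfle
    have hp0 : (0:ℝ) < p := by linarith
    nlinarith [mul_le_mul_of_nonneg_left hFE
      (show 0 ≤ p * F * ε ^ (-(p + 1)) by positivity)]
  · exact mul_nonneg hW.le (Real.rpow_nonneg hfp.le _)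
end

section
/- Let 1 < p < 3 and 1 < ρ < 2/(p−1). Then there are constants C > 0 and c > 0 such that for all sufficiently large t > 0: e^{tΔ}⟨·⟩^{−ρ}(x) ≤ C if |x| ≤ t^{1/(ρ(p−1))}, e^{tΔ}⟨·⟩^{−ρ}(x) ≤ C|x|^{−ρ} if |x| ≥ t^{1/(ρ(p−1))}, and e^{tΔ}⟨·⟩^{−ρ}(x) ≥ c|x|^{−ρ} if |x| ≥ t^{1/(ρ(p−1))}. -/
open Real MeasureTheory

/-- The one-dimensional heat semigroup `e^{tΔ}f(x) = (4πt)^{-1/2} ∫ e^{-y²/(4t)} f(x-y) dy`. -/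
noncomputable def heatSemigroup (t : ℝ) (f : ℝ → ℝ) (x : ℝ) : ℝ :=
  (4 * Real.pi * t) ^ (-(1:ℝ)/2) * ∫ y : ℝ, Real.exp (-y ^ 2 / (4 * t)) * f (x - y)

namespace HeatAux

lemma bracket_pos (ρ y : ℝ) : 0 < ((1 + y ^ 2) ^ ((1:ℝ)/2)) ^ (-ρ) := by positivity

lemma bracket_le_one {ρ : ℝ} (hρ : 0 ≤ ρ) (y : ℝ) :
    ((1 + y ^ 2) ^ ((1:ℝ)/2)) ^ (-ρ) ≤ 1 := by
  refine Real.rpow_le_one_of_one_le_of_nonpos ?_ (by linarith)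
  nth_rewrite 1 [← Real.one_rpow ((1:ℝ)/2)]
  exact Real.rpow_le_rpow (by norm_num) (by nlinarith [sq_nonneg y]) (by norm_num)

lemma abs_le_bracket (z : ℝ) : |z| ≤ (1 + z ^ 2) ^ ((1:ℝ)/2) := by
  have h : |z| = (z ^ 2) ^ ((1:ℝ)/2) := by
    rw [← Real.sqrt_eq_rpow, Real.sqrt_sq_eq_abs]
  rw [h]
  exact Real.rpow_le_rpow (sq_nonneg z) (by linarith) (by norm_num)

lemma bracket_le {ρ : ℝ} (hρ : 0 < ρ) {z : ℝ} (hz : z ≠ 0) :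
    ((1 + z ^ 2) ^ ((1:ℝ)/2)) ^ (-ρ) ≤ |z| ^ (-ρ) :=
  Real.rpow_le_rpow_of_nonpos (abs_pos.mpr hz) (abs_le_bracket z)
    (by linarith)

lemma gauss_integrable {c : ℝ} (hc : 0 < c) :
    Integrable (fun y : ℝ => Real.exp (-y ^ 2 / c)) := by
  have h : (fun y : ℝ => Real.exp (-y ^ 2 / c)) = fun y => Real.exp (-(1/c) * y ^ 2) := by
    funext y; congr 1; ring
  rw [h]
  exact integrable_exp_neg_mul_sq (by positivity)

lemma gauss_int {c : ℝ} (hc : 0 < c) :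
    (∫ y : ℝ, Real.exp (-y ^ 2 / c)) = √(π * c) := by
  have h : (fun y : ℝ => Real.exp (-y ^ 2 / c)) = fun y => Real.exp (-(1/c) * y ^ 2) := by
    funext y; congr 1; ring
  rw [h, integral_gaussian]
  congr 1
  field_simp

lemma bracket_continuous (ρ x : ℝ) :
    Continuous fun y : ℝ => ((1 + (x - y) ^ 2) ^ ((1:ℝ)/2)) ^ (-ρ) := by
  have c1 : Continuous fun y : ℝ => 1 + (x - y) ^ 2 := by continuity
  have c2 : Continuous fun y : ℝ => (1 + (x - y) ^ 2) ^ ((1:ℝ)/2) :=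
    c1.rpow_const (fun y => Or.inr (by norm_num))
  exact c2.rpow_const (fun y => Or.inl (by positivity))

lemma integrable_main (ρ : ℝ) {t : ℝ} (ht : 0 < t) (x : ℝ) (hρ : 0 ≤ ρ) :
    Integrable (fun y : ℝ =>
      Real.exp (-y ^ 2 / (4 * t)) * ((1 + (x - y) ^ 2) ^ ((1:ℝ)/2)) ^ (-ρ)) := by
  apply Integrable.mono' (gauss_integrable (c := 4 * t) (by positivity))
  · exact ((Real.continuous_exp.comp (by continuity)).mul (bracket_continuous ρ x)).aestronglyMeasurable
  · refine Filter.Eventually.of_forall fun y => ?_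
    rw [Real.norm_eq_abs, abs_of_nonneg (by positivity)]
    exact mul_le_of_le_one_right (le_of_lt (Real.exp_pos _)) (bracket_le_one hρ _)

lemma K_eq {t : ℝ} (ht : 0 < t) :
    (4 * π * t) ^ (-(1:ℝ)/2) = (√(π * (4 * t)))⁻¹ := by
  rw [show 4 * π * t = π * (4 * t) by ring, Real.sqrt_eq_rpow,
    ← Real.rpow_neg (by positivity)]
  norm_num

lemma sqrt_pos_4t {t : ℝ} (ht : 0 < t) : 0 < √(π * (4 * t)) :=
  Real.sqrt_pos.mpr (by positivity)

/-- First upper bound: the heat semigroup of the bracket is at most 1. -/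
lemma heat_le_one {ρ : ℝ} (hρ : 0 ≤ ρ) {t : ℝ} (ht : 0 < t) (x : ℝ) :
    heatSemigroup t (fun y => ((1 + y ^ 2) ^ ((1:ℝ)/2)) ^ (-ρ)) x ≤ 1 := by
  unfold heatSemigroup
  rw [K_eq ht]
  have h1 : (∫ y : ℝ, Real.exp (-y ^ 2 / (4 * t)) * ((1 + (x - y) ^ 2) ^ ((1:ℝ)/2)) ^ (-ρ))
      ≤ √(π * (4 * t)) := by
    rw [← gauss_int (c := 4 * t) (by positivity)]
    refine integral_mono_of_nonneg (Filter.Eventually.of_forall fun y => by positivity)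
      (gauss_integrable (by positivity)) (Filter.Eventually.of_forall fun y => ?_)
    exact mul_le_of_le_one_right (le_of_lt (Real.exp_pos _)) (bracket_le_one hρ _)
  calc (√(π * (4 * t)))⁻¹ * ∫ y : ℝ, Real.exp (-y ^ 2 / (4 * t)) *
          ((1 + (x - y) ^ 2) ^ ((1:ℝ)/2)) ^ (-ρ)
      ≤ (√(π * (4 * t)))⁻¹ * √(π * (4 * t)) := by
        apply mul_le_mul_of_nonneg_left h1 (by positivity)
    _ = 1 := inv_mul_cancel₀ (ne_of_gt (sqrt_pos_4t ht))

/-- Second upper bound. -/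
lemma heat_upper {ρ : ℝ} (hρ : 0 < ρ) {t x : ℝ} (ht : 0 < t) (hx : 1 ≤ |x|) :
    heatSemigroup t (fun y => ((1 + y ^ 2) ^ ((1:ℝ)/2)) ^ (-ρ)) x
      ≤ 2 ^ ρ * |x| ^ (-ρ) + √2 * Real.exp (-x ^ 2 / (32 * t)) := by
  have hx0 : (0:ℝ) < |x| := by linarith
  set A : ℝ := 2 ^ ρ * |x| ^ (-ρ) with hA
  set B : ℝ := Real.exp (-x ^ 2 / (32 * t)) with hB
  have hptwise : ∀ y : ℝ, Real.exp (-y ^ 2 / (4 * t)) * ((1 + (x - y) ^ 2) ^ ((1:ℝ)/2)) ^ (-ρ)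
      ≤ A * Real.exp (-y ^ 2 / (4 * t)) + B * Real.exp (-y ^ 2 / (8 * t)) := by
    intro y
    rcases le_or_gt |y| (|x| / 2) with h | h
    · have hxy : |x| / 2 ≤ |x - y| := by
        have := abs_sub_abs_le_abs_sub x y
        linarith
      have hne : x - y ≠ 0 := by
        intro h0
        rw [h0, abs_zero] at hxy
        linarith
      have h2 : ((1 + (x - y) ^ 2) ^ ((1:ℝ)/2)) ^ (-ρ) ≤ (|x| / 2) ^ (-ρ) := by
        calc ((1 + (x - y) ^ 2) ^ ((1:ℝ)/2)) ^ (-ρ) ≤ |x - y| ^ (-ρ) := bracket_le hρ hne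
          _ ≤ (|x| / 2) ^ (-ρ) :=
            Real.rpow_le_rpow_of_nonpos (by linarith) hxy (by linarith)
      have h3 : (|x| / 2) ^ (-ρ) = A := by
        rw [hA, show |x| / 2 = 2⁻¹ * |x| by ring,
          Real.mul_rpow (by norm_num) (abs_nonneg x),
          Real.inv_rpow (by norm_num), Real.rpow_neg (by norm_num), inv_inv]
      have h4 : Real.exp (-y ^ 2 / (4 * t)) * ((1 + (x - y) ^ 2) ^ ((1:ℝ)/2)) ^ (-ρ)
          ≤ A * Real.exp (-y ^ 2 / (4 * t)) := by
        rw [mul_comm]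
        apply mul_le_mul_of_nonneg_right (h3 ▸ h2) (le_of_lt (Real.exp_pos _))
      have h5 : 0 ≤ B * Real.exp (-y ^ 2 / (8 * t)) := by positivity
      linarith
    · have hy2 : x ^ 2 / 4 ≤ y ^ 2 := by
        have h1 : (|x| / 2) ^ 2 ≤ |y| ^ 2 := by
          apply sq_le_sq' <;> [linarith [abs_nonneg y]; linarith]
        rw [sq_abs] at h1
        nlinarith [sq_abs x]
      have h6 : Real.exp (-y ^ 2 / (4 * t)) ≤ B * Real.exp (-y ^ 2 / (8 * t)) := by
        rw [hB, ← Real.exp_add]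
        apply Real.exp_le_exp.mpr
        rw [div_add_div _ _ (by positivity) (by positivity), div_le_div_iff₀ (by positivity) (by positivity)]
        nlinarith [mul_nonneg (mul_pos ht ht).le (by linarith : (0:ℝ) ≤ 4 * y ^ 2 - x ^ 2)]
      have h7 : Real.exp (-y ^ 2 / (4 * t)) * ((1 + (x - y) ^ 2) ^ ((1:ℝ)/2)) ^ (-ρ)
          ≤ Real.exp (-y ^ 2 / (4 * t)) :=
        mul_le_of_le_one_right (le_of_lt (Real.exp_pos _)) (bracket_le_one hρ.le _)
      have h8 : 0 ≤ A * Real.exp (-y ^ 2 / (4 * t)) := by positivity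
      linarith
  unfold heatSemigroup
  rw [K_eq ht]
  have hint : (∫ y : ℝ, Real.exp (-y ^ 2 / (4 * t)) * ((1 + (x - y) ^ 2) ^ ((1:ℝ)/2)) ^ (-ρ))
      ≤ A * √(π * (4 * t)) + B * √(π * (8 * t)) := by
    have hI : (∫ y : ℝ, (A * Real.exp (-y ^ 2 / (4 * t)) + B * Real.exp (-y ^ 2 / (8 * t))))
        = A * √(π * (4 * t)) + B * √(π * (8 * t)) := by
      rw [integral_add ((gauss_integrable (c := 4 * t) (by positivity)).const_mul A)
        ((gauss_integrable (c := 8 * t) (by positivity)).const_mul B),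
        integral_const_mul, integral_const_mul,
        gauss_int (by positivity), gauss_int (by positivity)]
    rw [← hI]
    refine integral_mono_of_nonneg (Filter.Eventually.of_forall fun y => by positivity)
      (((gauss_integrable (c := 4 * t) (by positivity)).const_mul A).add
        ((gauss_integrable (c := 8 * t) (by positivity)).const_mul B))
      (Filter.Eventually.of_forall hptwise)
  have h8t : √(π * (8 * t)) = √2 * √(π * (4 * t)) := by
    rw [show π * (8 * t) = 2 * (π * (4 * t)) by ring, Real.sqrt_mul (by norm_num)]
  have hfin : (√(π * (4 * t)))⁻¹ * (A * √(π * (4 * t)) + B * √(π * (8 * t)))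
      = A + √2 * B := by
    rw [h8t]
    field_simp
  calc (√(π * (4 * t)))⁻¹ * ∫ y : ℝ, Real.exp (-y ^ 2 / (4 * t)) *
          ((1 + (x - y) ^ 2) ^ ((1:ℝ)/2)) ^ (-ρ)
      ≤ (√(π * (4 * t)))⁻¹ * (A * √(π * (4 * t)) + B * √(π * (8 * t))) :=
        mul_le_mul_of_nonneg_left hint (by positivity)
    _ = A + √2 * B := hfin

/-- Polynomial bound for exponential decay. -/
lemma exp_decay {β ρ : ℝ} (hβ : 0 < β) (hρ : 0 < ρ) :
    ∃ K > (0:ℝ), ∀ r : ℝ, 1 ≤ r → Real.exp (-(r ^ β) / 32) ≤ K * r ^ (-ρ) := by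
  set n : ℕ := ⌈ρ / β⌉₊ with hn
  refine ⟨(n.factorial : ℝ) * 32 ^ n, by positivity, fun r hr => ?_⟩
  have hr0 : (0:ℝ) < r := by linarith
  have hrb : (1:ℝ) ≤ r ^ β := by
    calc (1:ℝ) = (1:ℝ) ^ β := (Real.one_rpow β).symm
      _ ≤ r ^ β := Real.rpow_le_rpow (by norm_num) hr hβ.le
  have hrbpos : (0:ℝ) < r ^ β := by linarith
  have key : (r ^ β) ^ n ≤ (n.factorial : ℝ) * 32 ^ n * Real.exp (r ^ β / 32) := by
    have h1 : (r ^ β / 32) ^ n / (n.factorial : ℝ) ≤ Real.exp (r ^ β / 32) :=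
      Real.pow_div_factorial_le_exp _ (by positivity) n
    rw [div_pow, div_div, div_le_iff₀ (by positivity)] at h1
    calc (r ^ β) ^ n ≤ Real.exp (r ^ β / 32) * ((32:ℝ) ^ n * (n.factorial : ℝ)) := h1
      _ = (n.factorial : ℝ) * 32 ^ n * Real.exp (r ^ β / 32) := by ring
  have step1 : Real.exp (-(r ^ β) / 32) ≤ (n.factorial : ℝ) * 32 ^ n / (r ^ β) ^ n := by
    rw [show -(r ^ β) / 32 = -(r ^ β / 32) by ring, Real.exp_neg, ← one_div,
      div_le_div_iff₀ (Real.exp_pos _) (by positivity)]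
    calc 1 * (r ^ β) ^ n = (r ^ β) ^ n := one_mul _
      _ ≤ (n.factorial : ℝ) * 32 ^ n * Real.exp (r ^ β / 32) := key
  have step2 : (n.factorial : ℝ) * 32 ^ n / (r ^ β) ^ n
      = (n.factorial : ℝ) * 32 ^ n * r ^ (-(β * n)) := by
    rw [← Real.rpow_natCast (r ^ β) n, ← Real.rpow_mul hr0.le, Real.rpow_neg hr0.le,
      div_eq_mul_inv]
  have hρβn : ρ ≤ β * n := by
    have h1 : ρ / β ≤ (n : ℝ) := Nat.le_ceil _
    rw [div_le_iff₀ hβ] at h1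
    linarith [mul_comm β (n : ℝ)]
  have step3 : r ^ (-(β * (n:ℝ))) ≤ r ^ (-ρ) :=
    Real.rpow_le_rpow_of_exponent_le hr (by linarith)
  calc Real.exp (-(r ^ β) / 32) ≤ (n.factorial : ℝ) * 32 ^ n * r ^ (-(β * n)) :=
        step2 ▸ step1
    _ ≤ (n.factorial : ℝ) * 32 ^ n * r ^ (-ρ) := by
        apply mul_le_mul_of_nonneg_left step3 (by positivity)

/-- Lower bound. -/
lemma heat_lower {ρ : ℝ} (hρ : 0 < ρ) {t x : ℝ} (ht : 1 ≤ t) (hx : 1 ≤ |x|)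
    (hxt : √t ≤ |x|) :
    Real.exp (-(1:ℝ)/4) * (√5) ^ (-ρ) * (√π)⁻¹ * |x| ^ (-ρ)
      ≤ heatSemigroup t (fun y => ((1 + y ^ 2) ^ ((1:ℝ)/2)) ^ (-ρ)) x := by
  have ht0 : (0:ℝ) < t := by linarith
  have hst : (0:ℝ) < √t := Real.sqrt_pos.mpr ht0
  set m : ℝ := Real.exp (-(1:ℝ)/4) * ((√5) ^ (-ρ) * |x| ^ (-ρ)) with hm
  -- pointwise lower bound on the interval
  have hptw : ∀ y ∈ Set.Icc (-√t) (√t),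
      m ≤ Real.exp (-y ^ 2 / (4 * t)) * ((1 + (x - y) ^ 2) ^ ((1:ℝ)/2)) ^ (-ρ) := by
    intro y hy
    have hy' : |y| ≤ √t := abs_le.mpr ⟨hy.1, hy.2⟩
    have hy2 : y ^ 2 ≤ t := by
      have := Real.sq_sqrt ht0.le
      nlinarith [sq_abs y, abs_nonneg y]
    have hexp : Real.exp (-(1:ℝ)/4) ≤ Real.exp (-y ^ 2 / (4 * t)) := by
      apply Real.exp_le_exp.mpr
      rw [div_le_div_iff₀ (by norm_num) (by positivity)]
      nlinarith
    have hxy : |x - y| ≤ 2 * |x| := by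
      calc |x - y| ≤ |x| + |y| := abs_sub _ _
        _ ≤ 2 * |x| := by linarith
    have hbr : (√5) ^ (-ρ) * |x| ^ (-ρ) ≤ ((1 + (x - y) ^ 2) ^ ((1:ℝ)/2)) ^ (-ρ) := by
      have h1 : (1 + (x - y) ^ 2) ^ ((1:ℝ)/2) ≤ √5 * |x| := by
        have h2 : 1 + (x - y) ^ 2 ≤ 5 * x ^ 2 := by
          nlinarith [sq_abs (x - y), sq_abs x, abs_nonneg (x - y), abs_nonneg x]
        calc (1 + (x - y) ^ 2) ^ ((1:ℝ)/2) ≤ (5 * x ^ 2) ^ ((1:ℝ)/2) :=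
              Real.rpow_le_rpow (by positivity) h2 (by norm_num)
          _ = √5 * |x| := by
              rw [← Real.sqrt_eq_rpow, Real.sqrt_mul (by norm_num), Real.sqrt_sq_eq_abs]
      rw [← Real.mul_rpow (Real.sqrt_nonneg 5) (abs_nonneg x)]
      exact Real.rpow_le_rpow_of_nonpos (by positivity) h1 (by linarith)
    rw [hm]
    exact mul_le_mul hexp hbr (by positivity) (le_of_lt (Real.exp_pos _))
  have hInt := integrable_main ρ ht0 x hρ.le
  -- set integral lower bound
  have hset : m * (2 * √t) ≤ ∫ y in Set.Icc (-√t) (√t),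
      Real.exp (-y ^ 2 / (4 * t)) * ((1 + (x - y) ^ 2) ^ ((1:ℝ)/2)) ^ (-ρ) := by
    have hvol : (volume (Set.Icc (-√t) (√t))).toReal = 2 * √t := by
      rw [Real.volume_Icc, ENNReal.toReal_ofReal (by linarith)]
      ring
    have hconst : (∫ _ in Set.Icc (-√t) (√t), m) = m * (2 * √t) := by
      rw [setIntegral_const, measureReal_def, hvol, smul_eq_mul, mul_comm]
    rw [← hconst]
    apply setIntegral_mono_on
    · exact integrableOn_const (by rw [Real.volume_Icc]; exact ENNReal.ofReal_ne_top)
    · exact hInt.integrableOn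
    · exact measurableSet_Icc
    · exact hptw
  have hfull : (∫ y in Set.Icc (-√t) (√t),
        Real.exp (-y ^ 2 / (4 * t)) * ((1 + (x - y) ^ 2) ^ ((1:ℝ)/2)) ^ (-ρ))
      ≤ ∫ y : ℝ, Real.exp (-y ^ 2 / (4 * t)) * ((1 + (x - y) ^ 2) ^ ((1:ℝ)/2)) ^ (-ρ) :=
    setIntegral_le_integral hInt (Filter.Eventually.of_forall fun y => by positivity)
  unfold heatSemigroup
  rw [K_eq ht0]
  have hK : (0:ℝ) < (√(π * (4 * t)))⁻¹ := by
    rw [inv_pos]; exact sqrt_pos_4t ht0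
  have hchain : (√(π * (4 * t)))⁻¹ * (m * (2 * √t))
      ≤ (√(π * (4 * t)))⁻¹ * ∫ y : ℝ, Real.exp (-y ^ 2 / (4 * t)) *
        ((1 + (x - y) ^ 2) ^ ((1:ℝ)/2)) ^ (-ρ) :=
    mul_le_mul_of_nonneg_left (le_trans hset hfull) hK.le
  have heq : (√(π * (4 * t)))⁻¹ * (m * (2 * √t))
      = Real.exp (-(1:ℝ)/4) * (√5) ^ (-ρ) * (√π)⁻¹ * |x| ^ (-ρ) := by
    have h4 : √(π * (4 * t)) = 2 * √π * √t := by
      rw [show π * (4 * t) = 4 * (π * t) by ring, Real.sqrt_mul (by norm_num),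
        Real.sqrt_mul Real.pi_pos.le, show (4:ℝ) = 2 ^ 2 by norm_num, Real.sqrt_sq (by norm_num)]
      ring
    rw [h4, hm]
    have hπ : (0:ℝ) < √π := Real.sqrt_pos.mpr Real.pi_pos
    field_simp
  linarith [heq ▸ hchain]

end HeatAux

theorem heat_japanese_bracket_bounds {p ρ : ℝ} (hp1 : 1 < p) (hp3 : p < 3)
    (hρ1 : 1 < ρ) (hρ2 : ρ < 2 / (p - 1)) :
    ∃ C > (0:ℝ), ∃ c > (0:ℝ), ∃ T : ℝ, ∀ t : ℝ, T ≤ t → ∀ x : ℝ,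
      (|x| ≤ t ^ (1 / (ρ * (p - 1))) →
        heatSemigroup t (fun y => ((1 + y ^ 2) ^ ((1:ℝ)/2)) ^ (-ρ)) x ≤ C) ∧
      (t ^ (1 / (ρ * (p - 1))) ≤ |x| →
        heatSemigroup t (fun y => ((1 + y ^ 2) ^ ((1:ℝ)/2)) ^ (-ρ)) x ≤ C * |x| ^ (-ρ) ∧
        c * |x| ^ (-ρ) ≤ heatSemigroup t (fun y => ((1 + y ^ 2) ^ ((1:ℝ)/2)) ^ (-ρ)) x) := by
  have hρ0 : (0:ℝ) < ρ := by linarith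
  have hp0 : (0:ℝ) < p - 1 := by linarith
  set γ : ℝ := ρ * (p - 1) with hγ
  have hγ0 : 0 < γ := by positivity
  have hγ2 : γ < 2 := by
    rw [hγ]
    calc ρ * (p - 1) < (2 / (p - 1)) * (p - 1) := by
          apply mul_lt_mul_of_pos_right hρ2 hp0
      _ = 2 := by field_simp
  set β : ℝ := 2 - γ with hβdef
  have hβ0 : 0 < β := by rw [hβdef]; linarith
  obtain ⟨K, hK0, hKbound⟩ := HeatAux.exp_decay hβ0 hρ0
  refine ⟨1 + 2 ^ ρ + √2 * K, by positivity,
    Real.exp (-(1:ℝ)/4) * (√5) ^ (-ρ) * (√π)⁻¹, by positivity, 1, fun t ht x => ?_⟩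
  have ht0 : (0:ℝ) < t := by linarith
  have h2ρ : (0:ℝ) < 2 ^ ρ := Real.rpow_pos_of_pos (by norm_num) ρ
  have hsK : (0:ℝ) < √2 * K := by positivity
  constructor
  · intro _
    calc heatSemigroup t (fun y => ((1 + y ^ 2) ^ ((1:ℝ)/2)) ^ (-ρ)) x ≤ 1 :=
          HeatAux.heat_le_one hρ0.le ht0 x
      _ ≤ 1 + 2 ^ ρ + √2 * K := by linarith
  · intro hxt
    have h1γ : 0 < 1 / γ := by positivity
    have hx1 : (1:ℝ) ≤ |x| := by
      calc (1:ℝ) = (1:ℝ) ^ (1/γ) := (Real.one_rpow _).symm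
        _ ≤ t ^ (1/γ) := Real.rpow_le_rpow (by norm_num) ht h1γ.le
        _ ≤ |x| := hxt
    have hx0 : (0:ℝ) < |x| := by linarith
    have hst : √t ≤ |x| := by
      calc √t = t ^ ((1:ℝ)/2) := Real.sqrt_eq_rpow t
        _ ≤ t ^ (1/γ) := Real.rpow_le_rpow_of_exponent_le ht (by
            rw [div_le_div_iff₀ (by norm_num) hγ0]
            linarith)
        _ ≤ |x| := hxt
    have htxγ : t ≤ |x| ^ γ := by
      calc t = t ^ ((1/γ) * γ) := by
            rw [one_div_mul_cancel (ne_of_gt hγ0), Real.rpow_one]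
        _ = (t ^ (1/γ)) ^ γ := Real.rpow_mul ht0.le _ _
        _ ≤ |x| ^ γ := Real.rpow_le_rpow (by positivity) hxt hγ0.le
    have hβle : |x| ^ β ≤ x ^ 2 / t := by
      have hx2 : |x| ^ β = x ^ 2 / |x| ^ γ := by
        rw [hβdef, Real.rpow_sub hx0, show ((2:ℝ)) = ((2:ℕ):ℝ) by norm_num,
          Real.rpow_natCast, sq_abs]
      rw [hx2]
      exact div_le_div_of_nonneg_left (sq_nonneg x) ht0 htxγ
    have hexp2 : Real.exp (-x ^ 2 / (32 * t)) ≤ K * |x| ^ (-ρ) := by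
      calc Real.exp (-x ^ 2 / (32 * t)) ≤ Real.exp (-(|x| ^ β) / 32) := by
            apply Real.exp_le_exp.mpr
            rw [show -x ^ 2 / (32 * t) = -(x ^ 2 / t) / 32 by ring, neg_div, neg_div,
              neg_le_neg_iff]
            exact div_le_div_of_nonneg_right hβle (by norm_num)
        _ ≤ K * |x| ^ (-ρ) := hKbound |x| hx1
    have hxρ : (0:ℝ) < |x| ^ (-ρ) := Real.rpow_pos_of_pos hx0 _
    constructor
    · calc heatSemigroup t (fun y => ((1 + y ^ 2) ^ ((1:ℝ)/2)) ^ (-ρ)) x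
          ≤ 2 ^ ρ * |x| ^ (-ρ) + √2 * Real.exp (-x ^ 2 / (32 * t)) :=
            HeatAux.heat_upper hρ0 ht0 hx1
        _ ≤ 2 ^ ρ * |x| ^ (-ρ) + √2 * (K * |x| ^ (-ρ)) := by
            have h2 : (0:ℝ) ≤ √2 := Real.sqrt_nonneg 2
            nlinarith
        _ ≤ (1 + 2 ^ ρ + √2 * K) * |x| ^ (-ρ) := by nlinarith [Real.sqrt_nonneg 2]
    · exact HeatAux.heat_lower hρ0 ht hx1 hst
end
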